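/- Every tensor A ∈ ℝ^{n_L × n_N × n_R} admits a representation A(i,j,k) = (Q_L Σ_L N(j) Σ_R Q_R)_{i,k} such that: Q_L Σ_L, together with the right unfolding of Σ_L N Σ_R Q_R, forms a truncated SVD of the matricization A^{(1)}; the left unfolding of Q_L Σ_L N times Σ_R Q_R forms a truncated SVD of A^{(1,2)}; consequently Q_L has orthonormal columns, Q_R has orthonormal rows, the left unfolding of Σ_L N is column-orthogonal, and the right unfolding of N Σ_R is row-orthogonal. Here Σ_L, Σ_R are the diagonal matrices of nonzero singular values of A^{(1)} and A^{(1,2)} respectively. -/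

import Mathlib

open Matrix

/-- Left unfolding of a core `H : Fin n → ℝ^{k₁ × k₂}`: the `(k₁ n) × k₂` matrix
stacking the slices vertically. -/
def lunf {n k1 k2 : ℕ} (H : Fin n → Matrix (Fin k1) (Fin k2) ℝ) :
    Matrix (Fin k1 × Fin n) (Fin k2) ℝ := Matrix.of fun p q => H p.2 p.1 q

/-- Right unfolding of a core: the `k₁ × (n k₂)` matrix stacking the slices
horizontally. -/
def runf {n k1 k2 : ℕ} (H : Fin n → Matrix (Fin k1) (Fin k2) ℝ) :
    Matrix (Fin k1) (Fin n × Fin k2) ℝ := Matrix.of fun l p => H p.1 l p.2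

lemma conjT_eq_transpose {m n : Type*} (M : Matrix m n ℝ) : Mᴴ = Mᵀ := by
  ext i j; simp [conjTranspose_apply]

lemma csvd {m n : Type*} [Fintype m] [Fintype n] [DecidableEq n] (M : Matrix m n ℝ) :
    ∃ (r : ℕ) (U : Matrix m (Fin r) ℝ) (s : Fin r → ℝ)
      (V : Matrix n (Fin r) ℝ),
      (∀ a, 0 < s a) ∧ Uᵀ * U = 1 ∧ Vᵀ * V = 1 ∧ M = U * diagonal s * Vᵀ := by
  set G : Matrix (n) (n) ℝ := Mᴴ * M with hGdef
  have hG : G.IsHermitian := isHermitian_conjTranspose_mul_self M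
  have hGpsd : G.PosSemidef := posSemidef_conjTranspose_mul_self M
  set lam : n → ℝ := hG.eigenvalues with hlam
  have hlam_nonneg : ∀ i, 0 ≤ lam i := hGpsd.eigenvalues_nonneg
  set P : Matrix (n) (n) ℝ := (hG.eigenvectorUnitary : Matrix (n) (n) ℝ)
    with hPdef
  have hPP : Pᵀ * P = 1 := by
    have := (Matrix.mem_unitaryGroup_iff').mp hG.eigenvectorUnitary.2
    rwa [show (star P : Matrix (n) (n) ℝ) = Pᵀ from conjT_eq_transpose P] at this
  have hPPt : P * Pᵀ = 1 := by
    have := (Matrix.mem_unitaryGroup_iff).mp hG.eigenvectorUnitary.2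
    rwa [show (star P : Matrix (n) (n) ℝ) = Pᵀ from conjT_eq_transpose P] at this
  have hspec : G = P * diagonal lam * Pᵀ := by
    have := hG.spectral_theorem
    rw [Unitary.conjStarAlgAut_apply] at this
    rwa [show (star P : Matrix (n) (n) ℝ) = Pᵀ from conjT_eq_transpose P,
      show (RCLike.ofReal ∘ hG.eigenvalues : n → ℝ) = lam from rfl] at this
  classical
  set r : ℕ := Fintype.card {i : n // lam i ≠ 0} with hr
  set e : Fin r ≃ {i : n // lam i ≠ 0} := (Fintype.equivFin {i : n // lam i ≠ 0}).symm
    with he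
  set V : Matrix (n) (Fin r) ℝ := Matrix.of fun i a => P i (e a) with hVdef
  set s : Fin r → ℝ := fun a => Real.sqrt (lam (e a)) with hsdef
  have hlam_pos : ∀ a, 0 < lam (e a) := fun a =>
    lt_of_le_of_ne (hlam_nonneg _) (Ne.symm (e a).2)
  have hs_pos : ∀ a, 0 < s a := fun a => Real.sqrt_pos.mpr (hlam_pos a)
  have hs_sq : ∀ a, s a * s a = lam (e a) := fun a => Real.mul_self_sqrt (hlam_pos a).le
  have hVV : Vᵀ * V = 1 := by
    ext a b
    have : (Vᵀ * V) a b = (Pᵀ * P) (e a) (e b) := by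
      simp [mul_apply, hVdef]
    rw [this, hPP]
    by_cases hab : a = b
    · subst hab; simp
    · have : (e a : n) ≠ (e b : n) := by
        intro h'
        exact hab (e.injective (Subtype.ext h'))
      simp [one_apply, this, hab]
  -- G = V * diagonal (lam ∘ e) * Vᵀ
  have hGV : G = V * diagonal (fun a => lam (e a)) * Vᵀ := by
    rw [hspec]
    ext i j
    have lhs : (P * diagonal lam * Pᵀ) i j = ∑ k, P i k * lam k * P j k := by
      simp [mul_apply, diagonal, Finset.sum_mul, mul_comm]
    have rhs : (V * diagonal (fun a => lam (e a)) * Vᵀ) i j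
        = ∑ a, P i (e a) * lam (e a) * P j (e a) := by
      simp [mul_apply, diagonal, hVdef, Finset.sum_mul, mul_comm]
    rw [lhs, rhs]
    calc ∑ k, P i k * lam k * P j k
        = ∑ k ∈ Finset.univ.filter (fun k => lam k ≠ 0), P i k * lam k * P j k := by
          refine (Finset.sum_filter_of_ne ?_).symm
          intro k _ hk hlk
          exact hk (by rw [hlk]; ring)
      _ = ∑ x : {i : n // lam i ≠ 0}, P i x * lam x * P j x :=
          Finset.sum_subtype _ (fun k => by simp) _
      _ = ∑ a, P i (e a) * lam (e a) * P j (e a) := (Equiv.sum_comp e _).symm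
  -- M is recovered by projecting onto the columns of V
  have hMVV : M * V * Vᵀ = M := by
    have hK : (M * V * Vᵀ - M)ᴴ * (M * V * Vᵀ - M) = 0 := by
      rw [conjT_eq_transpose]
      have ht : (M * V * Vᵀ - M)ᵀ = V * Vᵀ * Mᵀ - Mᵀ := by
        simp [Matrix.transpose_sub, Matrix.transpose_mul, Matrix.mul_assoc]
      rw [ht]
      have hGT : Mᵀ * M = G := by rw [hGdef, conjT_eq_transpose]
      have h1 : Mᵀ * (M * V * Vᵀ) = G * (V * Vᵀ) := by
        rw [← Matrix.mul_assoc, ← Matrix.mul_assoc, hGT, Matrix.mul_assoc]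
      have hGVV : G * (V * Vᵀ) = G := by
        rw [hGV]
        calc V * diagonal (fun a => lam (e a)) * Vᵀ * (V * Vᵀ)
            = V * diagonal (fun a => lam (e a)) * (Vᵀ * V) * Vᵀ := by
              simp [Matrix.mul_assoc]
          _ = V * diagonal (fun a => lam (e a)) * Vᵀ := by rw [hVV, Matrix.mul_one]
      have hVVG : V * Vᵀ * G = G := by
        rw [hGV]
        calc V * Vᵀ * (V * diagonal (fun a => lam (e a)) * Vᵀ)
            = V * (Vᵀ * V) * (diagonal (fun a => lam (e a)) * Vᵀ) := by
              simp [Matrix.mul_assoc]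
          _ = V * diagonal (fun a => lam (e a)) * Vᵀ := by
              rw [hVV, Matrix.mul_one, Matrix.mul_assoc]
      rw [Matrix.sub_mul, Matrix.mul_sub, Matrix.mul_sub]
      rw [Matrix.mul_assoc (V * Vᵀ) Mᵀ (M * V * Vᵀ), h1]
      rw [Matrix.mul_assoc (V * Vᵀ) Mᵀ M, hGT]
      rw [hGVV, hVVG]
      simp
    have := Matrix.conjTranspose_mul_self_eq_zero.mp hK
    exact sub_eq_zero.mp this
  refine ⟨r, M * V * diagonal (fun a => (s a)⁻¹), s, V, hs_pos, ?_, hVV, ?_⟩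
  · have hVGV : Vᵀ * (G * V) = diagonal (fun a => lam (e a)) := by
      rw [hGV]
      calc Vᵀ * (V * diagonal (fun a => lam (e a)) * Vᵀ * V)
          = (Vᵀ * V) * diagonal (fun a => lam (e a)) * (Vᵀ * V) := by
            simp [Matrix.mul_assoc]
        _ = diagonal (fun a => lam (e a)) := by rw [hVV, Matrix.one_mul, Matrix.mul_one]
    have ht : (M * V * diagonal (fun a => (s a)⁻¹))ᵀ
        = diagonal (fun a => (s a)⁻¹) * (Vᵀ * Mᵀ) := by
      simp [Matrix.transpose_mul, Matrix.mul_assoc, Matrix.diagonal_transpose]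
    rw [ht]
    have hGT : Mᵀ * M = G := by rw [hGdef, conjT_eq_transpose]
    calc diagonal (fun a => (s a)⁻¹) * (Vᵀ * Mᵀ) * (M * V * diagonal (fun a => (s a)⁻¹))
        = diagonal (fun a => (s a)⁻¹) * (Vᵀ * ((Mᵀ * M) * V)) * diagonal (fun a => (s a)⁻¹) := by
          simp [Matrix.mul_assoc]
      _ = diagonal (fun a => (s a)⁻¹) * diagonal (fun a => lam (e a))
            * diagonal (fun a => (s a)⁻¹) := by rw [hGT, hVGV]
      _ = 1 := by
          rw [Matrix.diagonal_mul_diagonal, Matrix.diagonal_mul_diagonal]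
          have hfun : (fun a => (s a)⁻¹ * lam (e a) * (s a)⁻¹) = fun _ => (1:ℝ) := by
            funext a
            rw [← hs_sq a]
            field_simp
            exact div_self (hs_pos a).ne'
          rw [hfun, Matrix.diagonal_one]
  · calc M = M * V * Vᵀ := hMVV.symm
      _ = M * V * (diagonal (fun a => (s a)⁻¹) * diagonal s) * Vᵀ := by
          rw [Matrix.diagonal_mul_diagonal]
          rw [show (fun a => (s a)⁻¹ * s a) = fun _ => (1:ℝ) from
            funext fun a => inv_mul_cancel₀ (hs_pos a).ne', Matrix.diagonal_one, Matrix.mul_one]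
      _ = M * V * diagonal (fun a => (s a)⁻¹) * diagonal s * Vᵀ := by
          simp [Matrix.mul_assoc]


lemma lunf_gram {n k1 k2 : ℕ} (H : Fin n → Matrix (Fin k1) (Fin k2) ℝ) :
    (lunf H)ᵀ * lunf H = ∑ j, (H j)ᵀ * H j := by
  ext a b
  simp only [mul_apply, transpose_apply, lunf, of_apply, Finset.sum_apply,
    Fintype.sum_prod_type, Matrix.sum_apply]
  rw [Finset.sum_comm]

lemma runf_gram {n k1 k2 : ℕ} (H : Fin n → Matrix (Fin k1) (Fin k2) ℝ) :
    runf H * (runf H)ᵀ = ∑ j, H j * (H j)ᵀ := by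
  ext a b
  simp only [mul_apply, transpose_apply, runf, of_apply, Finset.sum_apply,
    Fintype.sum_prod_type, Matrix.sum_apply]

lemma runf_left_mul {n k p q : ℕ} (B : Matrix (Fin k) (Fin p) ℝ)
    (C : Fin n → Matrix (Fin p) (Fin q) ℝ) :
    runf (fun j => B * C j) = B * runf C := by
  ext l pr
  simp [runf, mul_apply]

lemma lunf_right_mul {n k p q : ℕ} (C : Fin n → Matrix (Fin k) (Fin p) ℝ)
    (B : Matrix (Fin p) (Fin q) ℝ) :
    lunf (fun j => C j * B) = lunf C * B := by
  ext pr q'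
  simp [lunf, mul_apply]

lemma ortho_cancel {m n p : Type*} [Fintype m] [Fintype n] [DecidableEq n] (Q : Matrix m n ℝ)
    (h : Qᵀ * Q = 1) (X : Matrix n p ℝ) : Qᵀ * (Q * X) = X := by
  rw [← Matrix.mul_assoc, h, Matrix.one_mul]

lemma diag_mul_inv {r : ℕ} (s : Fin r → ℝ) (hs : ∀ a, s a ≠ 0) :
    diagonal s * diagonal (fun a => (s a)⁻¹) = (1 : Matrix (Fin r) (Fin r) ℝ) := by
  rw [Matrix.diagonal_mul_diagonal]
  have : (fun a => s a * (s a)⁻¹) = fun _ => (1:ℝ) := funext fun a => mul_inv_cancel₀ (hs a)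
  rw [this, Matrix.diagonal_one]

lemma diag_inv_mul {r : ℕ} (s : Fin r → ℝ) (hs : ∀ a, s a ≠ 0) :
    diagonal (fun a => (s a)⁻¹) * diagonal s = (1 : Matrix (Fin r) (Fin r) ℝ) := by
  rw [Matrix.diagonal_mul_diagonal]
  have : (fun a => (s a)⁻¹ * s a) = fun _ => (1:ℝ) := funext fun a => inv_mul_cancel₀ (hs a)
  rw [this, Matrix.diagonal_one]

lemma diag_cancel₁ {r : ℕ} {p : Type*} (s : Fin r → ℝ) (hs : ∀ a, s a ≠ 0)
    (X : Matrix (Fin r) p ℝ) :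
    diagonal s * (diagonal (fun a => (s a)⁻¹) * X) = X := by
  rw [← Matrix.mul_assoc, diag_mul_inv s hs, Matrix.one_mul]

lemma diag_cancel₂ {r : ℕ} {p : Type*} (s : Fin r → ℝ) (hs : ∀ a, s a ≠ 0)
    (X : Matrix (Fin r) p ℝ) :
    diagonal (fun a => (s a)⁻¹) * (diagonal s * X) = X := by
  rw [← Matrix.mul_assoc, diag_inv_mul s hs, Matrix.one_mul]

/-- existence of the standard representation
`A(i,j,k) = (Q_L Σ_L N(j) Σ_R Q_R)_{i,k}` whose two induced factorizations are
truncated SVDs of `A^{(1)}` and `A^{(1,2)}`, with the asserted orthogonality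
properties and positive diagonal singular values. -/
theorem stmt6 (nL nN nR : ℕ) (A : Fin nL → Fin nN → Fin nR → ℝ) :
    ∃ (rL rR : ℕ) (QL : Matrix (Fin nL) (Fin rL) ℝ) (sL : Fin rL → ℝ)
      (N : Fin nN → Matrix (Fin rL) (Fin rR) ℝ) (sR : Fin rR → ℝ)
      (QR : Matrix (Fin rR) (Fin nR) ℝ),
      (∀ a, 0 < sL a) ∧ (∀ b, 0 < sR b) ∧
      (∀ i j k, A i j k =
        (QL * Matrix.diagonal sL * N j * Matrix.diagonal sR * QR) i k) ∧
      -- truncated SVD of the matricization A^{(1)}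
      ((Matrix.of fun (i : Fin nL) (p : Fin nN × Fin nR) => A i p.1 p.2) =
        QL * Matrix.diagonal sL * runf (fun j => N j * Matrix.diagonal sR * QR)) ∧
      QLᵀ * QL = 1 ∧
      (runf fun j => N j * Matrix.diagonal sR * QR) *
        (runf fun j => N j * Matrix.diagonal sR * QR)ᵀ = 1 ∧
      -- truncated SVD of the matricization A^{(1,2)}
      ((Matrix.of fun (p : Fin nL × Fin nN) (k : Fin nR) => A p.1 p.2 k) =
        lunf (fun j => QL * Matrix.diagonal sL * N j) * Matrix.diagonal sR * QR) ∧
      (lunf fun j => QL * Matrix.diagonal sL * N j)ᵀ *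
        (lunf fun j => QL * Matrix.diagonal sL * N j) = 1 ∧
      QR * QRᵀ = 1 ∧
      -- consequently: left unfolding of Σ_L N is column-orthogonal,
      -- right unfolding of N Σ_R is row-orthogonal
      (lunf fun j => Matrix.diagonal sL * N j)ᵀ *
        (lunf fun j => Matrix.diagonal sL * N j) = 1 ∧
      (runf fun j => N j * Matrix.diagonal sR) *
        (runf fun j => N j * Matrix.diagonal sR)ᵀ = 1 := by
    classical
  set M1 : Matrix (Fin nL) (Fin nN × Fin nR) ℝ :=
    Matrix.of fun (i : Fin nL) (p : Fin nN × Fin nR) => A i p.1 p.2 with hM1def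
  set M2 : Matrix (Fin nL × Fin nN) (Fin nR) ℝ :=
    Matrix.of fun (p : Fin nL × Fin nN) (k : Fin nR) => A p.1 p.2 k with hM2def
  obtain ⟨rL, QL, sL, V1, hsL, hQL, hV1, hM1⟩ := csvd M1
  obtain ⟨rR, U2, sR, V2, hsR, hU2, hV2, hM2⟩ := csvd M2
  have hsL' : ∀ a, sL a ≠ 0 := fun a => (hsL a).ne'
  have hsR' : ∀ a, sR a ≠ 0 := fun a => (hsR a).ne'
  set Aj : Fin nN → Matrix (Fin nL) (Fin nR) ℝ :=
    fun j => Matrix.of fun i k => A i j k with hAjdef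
  set DLi : Matrix (Fin rL) (Fin rL) ℝ := diagonal (fun a => (sL a)⁻¹) with hDLidef
  set DRi : Matrix (Fin rR) (Fin rR) ℝ := diagonal (fun a => (sR a)⁻¹) with hDRidef
  set N : Fin nN → Matrix (Fin rL) (Fin rR) ℝ :=
    fun j => DLi * (QLᵀ * (Aj j * (V2 * DRi))) with hNdef
  have hrunfAj : runf Aj = M1 := by ext l p; rfl
  have hlunfAj : lunf Aj = M2 := by ext p k; rfl
  have hP1 : ∀ j, QL * (QLᵀ * Aj j) = Aj j := by
    intro j
    have h : QL * (QLᵀ * M1) = M1 := by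
      rw [hM1]
      simp only [Matrix.mul_assoc]
      rw [ortho_cancel QL hQL]
    ext i k
    have h2 := Matrix.ext_iff.mpr h i (j, k)
    simpa [mul_apply, hM1def, hAjdef] using h2
  have hP2 : ∀ j, Aj j * (V2 * V2ᵀ) = Aj j := by
    intro j
    have h : M2 * (V2 * V2ᵀ) = M2 := by
      rw [hM2]
      simp only [Matrix.mul_assoc]
      rw [ortho_cancel V2 hV2 V2ᵀ]
    ext i k
    have h2 := Matrix.ext_iff.mpr h (i, j) k
    simpa [mul_apply, hM2def, hAjdef] using h2
  have hP1X : ∀ (j) {p : Type} (X : Matrix (Fin nR) p ℝ),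
      QL * (QLᵀ * (Aj j * X)) = Aj j * X := by
    intro j p X
    rw [← Matrix.mul_assoc QLᵀ (Aj j) X, ← Matrix.mul_assoc QL (QLᵀ * Aj j) X,
      ← Matrix.mul_assoc QL QLᵀ (Aj j), Matrix.mul_assoc QL QLᵀ (Aj j), hP1 j]
  have hNR : ∀ j, N j * diagonal sR * V2ᵀ = DLi * QLᵀ * Aj j := by
    intro j
    rw [hNdef]
    simp only [Matrix.mul_assoc]
    rw [diag_cancel₂ sR hsR' V2ᵀ, hP2 j]
  have hLN : ∀ j, QL * diagonal sL * N j = Aj j * (V2 * DRi) := by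
    intro j
    rw [hNdef]
    simp only [Matrix.mul_assoc]
    rw [diag_cancel₁ sL hsL' (QLᵀ * (Aj j * (V2 * DRi))), hP1X j (V2 * DRi)]
  have hRep : ∀ j, QL * diagonal sL * N j * diagonal sR * V2ᵀ = Aj j := by
    intro j
    rw [hLN j]
    simp only [Matrix.mul_assoc]
    rw [diag_cancel₂ sR hsR' V2ᵀ, hP2 j]
  have hW : runf (fun j => N j * diagonal sR * V2ᵀ) = V1ᵀ := by
    have h1 : (fun j => N j * diagonal sR * V2ᵀ) = fun j => (DLi * QLᵀ) * Aj j := by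
      funext j; rw [hNR j, Matrix.mul_assoc]
    rw [h1, runf_left_mul, hrunfAj, hM1]
    simp only [Matrix.mul_assoc]
    rw [ortho_cancel QL hQL, diag_cancel₂ sL hsL' V1ᵀ]
  have hL : lunf (fun j => QL * diagonal sL * N j) = U2 := by
    have h1 : (fun j => QL * diagonal sL * N j) = fun j => Aj j * (V2 * DRi) := by
      funext j; rw [hLN j]
    rw [h1, lunf_right_mul, hlunfAj, hM2]
    simp only [Matrix.mul_assoc]
    rw [ortho_cancel V2 hV2 DRi, hDRidef, diag_mul_inv sR hsR', Matrix.mul_one]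
  refine ⟨rL, rR, QL, sL, N, sR, V2ᵀ, hsL, hsR, ?_, ?_, hQL, ?_, ?_, ?_, ?_, ?_, ?_⟩
  · intro i j k
    rw [hRep j]
    rfl
  · rw [hW]
    exact hM1
  · rw [hW, Matrix.transpose_transpose]
    exact hV1
  · rw [hL, hM2]
  · rw [hL]
    exact hU2
  · rw [Matrix.transpose_transpose]
    exact hV2
  · have h1 : (lunf fun j => QL * diagonal sL * N j)ᵀ *
        (lunf fun j => QL * diagonal sL * N j) = 1 := by rw [hL]; exact hU2
    rw [lunf_gram] at h1 ⊢
    rw [← h1]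
    apply Finset.sum_congr rfl
    intro j _
    have h2 : (QL * diagonal sL * N j)ᵀ * (QL * diagonal sL * N j)
        = (diagonal sL * N j)ᵀ * (diagonal sL * N j) := by
      rw [Matrix.mul_assoc QL (diagonal sL) (N j),
        Matrix.transpose_mul QL (diagonal sL * N j), Matrix.mul_assoc,
        ortho_cancel QL hQL]
    exact h2.symm
  · have h1 : (runf fun j => N j * diagonal sR * V2ᵀ) *
        (runf fun j => N j * diagonal sR * V2ᵀ)ᵀ = 1 := by
      rw [hW, Matrix.transpose_transpose]; exact hV1
    rw [runf_gram] at h1 ⊢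
    rw [← h1]
    apply Finset.sum_congr rfl
    intro j _
    have h2 : N j * diagonal sR * V2ᵀ * (N j * diagonal sR * V2ᵀ)ᵀ
        = N j * diagonal sR * (N j * diagonal sR)ᵀ := by
      rw [Matrix.transpose_mul (N j * diagonal sR) V2ᵀ, Matrix.transpose_transpose,
        Matrix.mul_assoc (N j * diagonal sR) V2ᵀ (V2 * (N j * diagonal sR)ᵀ),
        ortho_cancel V2 hV2]
    exact h2.symm
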